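/- For a positive semidefinite ρ with unit trace and Hermitian H, the quantity δH² := tr(H√ρ H√ρ) − (tr(Hρ))² is nonnegative. -/

import Mathlib

open ComplexOrder
open scoped Matrix
set_option maxHeartbeats 1000000

/-- The old Mathlib `Matrix.PosSemidef.sqrt` (removed from Mathlib), restored with its original
definition. -/
noncomputable def Matrix.PosSemidef.sqrt {n : Type*} [Fintype n] {𝕜 : Type*} [RCLike 𝕜]
    [DecidableEq n] {A : Matrix n n 𝕜} (hA : A.PosSemidef) : Matrix n n 𝕜 :=
  hA.1.eigenvectorUnitary.1 * Matrix.diagonal (fun i => ((Real.sqrt (hA.1.eigenvalues i) : ℝ) : 𝕜)) *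
  (star hA.1.eigenvectorUnitary : Matrix n n 𝕜)

lemma Matrix.PosSemidef.posSemidef_sqrt {n : Type*} [Fintype n] {𝕜 : Type*} [RCLike 𝕜]
    [DecidableEq n] {A : Matrix n n 𝕜} (hA : A.PosSemidef) : hA.sqrt.PosSemidef := by
  unfold Matrix.PosSemidef.sqrt
  have hD : (Matrix.diagonal (fun i => ((Real.sqrt (hA.1.eigenvalues i) : ℝ) : 𝕜))).PosSemidef :=
    Matrix.posSemidef_diagonal_iff.mpr (fun i => RCLike.ofReal_nonneg.mpr (Real.sqrt_nonneg _))
  have := hD.mul_mul_conjTranspose_same hA.1.eigenvectorUnitary.1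
  rwa [← Matrix.star_eq_conjTranspose] at this

lemma Matrix.PosSemidef.sqrt_mul_self {n : Type*} [Fintype n] {𝕜 : Type*} [RCLike 𝕜]
    [DecidableEq n] {A : Matrix n n 𝕜} (hA : A.PosSemidef) : hA.sqrt * hA.sqrt = A := by
  unfold Matrix.PosSemidef.sqrt
  set U := hA.1.eigenvectorUnitary with hU
  set D := Matrix.diagonal (fun i => ((Real.sqrt (hA.1.eigenvalues i) : ℝ) : 𝕜)) with hD
  have key : (star U : Matrix n n 𝕜) * U.1 = 1 := Unitary.coe_star_mul_self U
  have hDD : D * D = Matrix.diagonal (RCLike.ofReal ∘ hA.1.eigenvalues) := by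
    rw [hD, Matrix.diagonal_mul_diagonal]
    congr 1
    funext i
    simp only [Function.comp_apply, ← RCLike.ofReal_mul]
    rw [Real.mul_self_sqrt (hA.eigenvalues_nonneg i)]
  calc U.1 * D * (star U : Matrix n n 𝕜) * (U.1 * D * (star U : Matrix n n 𝕜))
      = U.1 * D * ((star U : Matrix n n 𝕜) * U.1) * D * (star U : Matrix n n 𝕜) := by
        simp only [Matrix.mul_assoc]
    _ = U.1 * (D * D) * (star U : Matrix n n 𝕜) := by
        rw [key]; simp only [Matrix.mul_one, Matrix.mul_assoc]
    _ = A := by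
        rw [hDD]
        conv_rhs => rw [hA.1.spectral_theorem]
        rw [Unitary.conjStarAlgAut_apply]

lemma myTraceNonneg {n : ℕ} {A : Matrix (Fin n) (Fin n) ℂ} (hA : A.PosSemidef) :
    0 ≤ A.trace := by
  exact hA.trace_nonneg

/-- Nonnegativity of `δH² = tr(H√ρH√ρ) − (tr(Hρ))²`. -/
theorem deltaSq_nonneg (n : ℕ) (ρ H : Matrix (Fin n) (Fin n) ℂ)
    (hρ : ρ.PosSemidef) (htr : ρ.trace = 1) (hH : H.IsHermitian) :
    0 ≤ ((H * hρ.sqrt * H * hρ.sqrt).trace).re - (((H * ρ).trace).re) ^ 2 := by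
  set s := hρ.sqrt with hs
  have hsps : s.PosSemidef := hρ.posSemidef_sqrt
  set q := hsps.sqrt with hqdef
  have hqps : q.PosSemidef := hsps.posSemidef_sqrt
  have hqq : q * q = s := hsps.sqrt_mul_self
  have hss : s * s = ρ := hρ.sqrt_mul_self
  set b : ℝ := ((H * ρ).trace).re with hb
  set X : Matrix (Fin n) (Fin n) ℂ := q * H * q - (b : ℂ) • (q * q) with hX
  have hqh : qᴴ = q := hqps.isHermitian
  have hXh : Xᴴ = X := by
    rw [hX]
    simp [Matrix.conjTranspose_sub, Matrix.conjTranspose_mul, Matrix.conjTranspose_smul,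
      hqh, hH.eq, Complex.star_def, Complex.conj_ofReal, Matrix.mul_assoc]
  have h0 : (0 : ℂ) ≤ (X * X).trace := by
    have : X * X = Xᴴ * X := by rw [hXh]
    rw [this]
    exact myTraceNonneg (Matrix.posSemidef_conjTranspose_mul_self X)
  have expand : (X * X).trace
      = ((q * H * q) * (q * H * q)).trace
        - (b : ℂ) * ((q * H * q) * (q * q)).trace
        - (b : ℂ) * ((q * q) * (q * H * q)).trace
        + (b : ℂ) ^ 2 * ((q * q) * (q * q)).trace := by
    rw [hX]
    simp only [Matrix.sub_mul, Matrix.mul_sub, Matrix.smul_mul, Matrix.mul_smul,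
      Matrix.trace_sub, Matrix.trace_smul, smul_smul, smul_eq_mul]
    ring
  have h1 : ((q * H * q) * (q * H * q)).trace = (H * s * H * s).trace := by
    rw [← hqq]
    conv_lhs => rw [show (q * H * q) * (q * H * q) = q * (H * q * (q * H * q)) by
      simp only [Matrix.mul_assoc]]
    rw [Matrix.trace_mul_comm]
    simp only [Matrix.mul_assoc]
  have h2 : ((q * H * q) * (q * q)).trace = (H * ρ).trace := by
    rw [← hss, ← hqq]
    conv_lhs => rw [show (q * H * q) * (q * q) = q * (H * q * (q * q)) by
      simp only [Matrix.mul_assoc]]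
    rw [Matrix.trace_mul_comm]
    simp only [Matrix.mul_assoc]
  have h3 : ((q * q) * (q * H * q)).trace = (H * ρ).trace := by
    rw [Matrix.trace_mul_comm]; exact h2
  have h4 : ((q * q) * (q * q)).trace = 1 := by rw [hqq, hss, htr]
  rw [h1, h2, h3, h4] at expand
  have hre : 0 ≤ ((X * X).trace).re := (Complex.nonneg_iff.mp h0).1
  rw [expand] at hre
  simp only [Complex.add_re, Complex.sub_re, Complex.mul_re, Complex.ofReal_re,
    Complex.ofReal_im, Complex.one_re, Complex.one_im, mul_one, mul_zero, zero_mul,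
    sub_zero, ← Complex.ofReal_pow] at hre
  rw [← hb] at hre
  nlinarith [hre]
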